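/- Let θ ∈ (0, 1/2], let n ≥ 1 be an integer, let y ∈ S_{T[θ,S_n]} with basis expansion y = Σ_{i=1}^∞ b_i e_i, and let j be a positive integer. Define sgn(t) = 1 if t ≥ 0 and sgn(t) = −1 if t < 0. Then the vector z = Σ_{i≠j} (1 − θ) b_i e_i + (b_j + sgn(b_j)) e_j satisfies ‖z‖ = 1 + |b_j|. -/

import Mathlib

open scoped BigOperators

noncomputable section

/-- Projection of a finitely supported vector onto the coordinates in `E`. -/
def tsProj (E : Finset ℕ+) (x : ℕ+ →₀ ℝ) : ℕ+ →₀ ℝ :=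
  x.filter fun i => i ∈ E

/-- The Schreier families `S_n` on the positive integers:
`S₁` consists of the sets `F` with `|F| ≤ min F` (together with `∅`), and `S_{n+1}`
consists of unions `F₁ ∪ ⋯ ∪ F_d` of nonempty members `F₁ < ⋯ < F_d` of `S_n`
with `d ≤ min F₁` (together with `∅`). -/
def Schreier : ℕ → Set (Finset ℕ+)
  | 0 => {F | F.card ≤ 1}
  | 1 => {F | ∀ a ∈ F, F.card ≤ (a : ℕ)}
  | n + 2 =>
      {F | F = ∅ ∨
        ∃ (d : ℕ) (G : Fin d → Finset ℕ+),
          0 < d ∧ (∀ i, G i ∈ Schreier (n + 1)) ∧ (∀ i, (G i).Nonempty) ∧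
          (∀ i j : Fin d, i < j → ∀ a ∈ G i, ∀ b ∈ G j, a < b) ∧
          (∀ i, ∀ a ∈ G i, d ≤ (a : ℕ)) ∧ F = Finset.univ.biUnion G}

/-- A tuple of nonempty finite sets `E 0 < E 1 < ⋯` whose set of minima belongs to `S`. -/
def TsAdmissible (S : Set (Finset ℕ+)) {d : ℕ} (E : Fin d → Finset ℕ+) : Prop :=
  (∀ i, (E i).Nonempty) ∧
  (∀ i j : Fin d, i < j → ∀ a ∈ E i, ∀ b ∈ E j, a < b) ∧
  ∃ μ : Fin d → ℕ+, (∀ i, IsLeast (↑(E i) : Set ℕ+) (μ i)) ∧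
    Finset.univ.image μ ∈ S

/-- The iterated norms `‖·‖_m` in the construction of the Tsirelson norm:
`‖x‖₀` is the supremum norm and
`‖x‖_{m+1} = max(‖x‖_m, sup{θ ∑ᵢ ‖Eᵢ x‖_m : E₁ < ⋯ < E_d, {min Eᵢ} ∈ S})`. -/
def tnormAux (θ : ℝ) (S : Set (Finset ℕ+)) : ℕ → (ℕ+ →₀ ℝ) → ℝ
  | 0, x => ⨆ i, |x i|
  | m + 1, x =>
      max (tnormAux θ S m x)
        (sSup {r : ℝ | ∃ (d : ℕ) (E : Fin d → Finset ℕ+), TsAdmissible S E ∧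
          r = θ * ∑ i, tnormAux θ S m (tsProj (E i) x)})

/-- The Tsirelson norm `‖x‖_{θ,S} = sup_m ‖x‖_m` on `c₀₀`. -/
def tnorm (θ : ℝ) (S : Set (Finset ℕ+)) (x : ℕ+ →₀ ℝ) : ℝ :=
  ⨆ m : ℕ, tnormAux θ S m x

/-- `X`, together with the sequence `e` of unit vectors, is (a realization of) the
Tsirelson space `T[θ, S_n]`: a Banach space containing `c₀₀` isometrically
(w.r.t. the Tsirelson norm) as a dense subspace, in which `(e i)` is a
(1-unconditional) basis, i.e. every `x` has a unique expansion `x = ∑ᵢ aᵢ eᵢ`. -/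
structure IsTsirelsonSpace (θ : ℝ) (n : ℕ) (X : Type*) [NormedAddCommGroup X]
    [NormedSpace ℝ X] (e : ℕ+ → X) : Prop where
  complete : CompleteSpace X
  norm_embed : ∀ a : ℕ+ →₀ ℝ, ‖a.sum fun i c => c • e i‖ = tnorm θ (Schreier n) a
  dense_embed : DenseRange fun a : ℕ+ →₀ ℝ => a.sum fun i c => c • e i
  expansion : ∀ x : X, ∃! a : ℕ+ → ℝ, HasSum (fun i => a i • e i) x

namespace TsAux

def l1 (x : ℕ+ →₀ ℝ) : ℝ := ∑ i ∈ x.support, |x i|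

lemma l1_nonneg (x : ℕ+ →₀ ℝ) : 0 ≤ l1 x := Finset.sum_nonneg fun _ _ => abs_nonneg _

lemma abs_le_l1 (x : ℕ+ →₀ ℝ) (i : ℕ+) : |x i| ≤ l1 x := by
  by_cases h : i ∈ x.support
  · exact Finset.single_le_sum (f := fun k => |x k|) (fun _ _ => abs_nonneg _) h
  · simp only [Finsupp.notMem_support_iff.mp h, abs_zero]
    exact l1_nonneg x

lemma l1_zero : l1 (0 : ℕ+ →₀ ℝ) = 0 := by simp [l1]

lemma l1_single_le (j : ℕ+) (c : ℝ) : l1 (Finsupp.single j c) ≤ |c| := by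
  unfold l1
  by_cases h : c = 0
  · simp [h]
  · rw [Finsupp.support_single_ne_zero _ h]
    simp

lemma tsProj_add (E : Finset ℕ+) (x y : ℕ+ →₀ ℝ) :
    tsProj E (x + y) = tsProj E x + tsProj E y := Finsupp.filter_add

lemma tsProj_smul (E : Finset ℕ+) (c : ℝ) (x : ℕ+ →₀ ℝ) :
    tsProj E (c • x) = c • tsProj E x := by
  ext i
  by_cases h : i ∈ E
  · simp [tsProj, Finsupp.filter_apply_pos _ _ h]
  · simp [tsProj, Finsupp.filter_apply_neg _ _ h]

lemma tsProj_single_of_mem {E : Finset ℕ+} {j : ℕ+} (h : j ∈ E) (c : ℝ) :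
    tsProj E (Finsupp.single j c) = Finsupp.single j c :=
  Finsupp.filter_single_of_pos _ h

lemma tsProj_single_of_not_mem {E : Finset ℕ+} {j : ℕ+} (h : j ∉ E) (c : ℝ) :
    tsProj E (Finsupp.single j c) = 0 :=
  Finsupp.filter_single_of_neg _ h

lemma l1_tsProj (E : Finset ℕ+) (x : ℕ+ →₀ ℝ) :
    l1 (tsProj E x) = ∑ i ∈ x.support.filter (fun i => i ∈ E), |x i| := by
  unfold l1 tsProj
  rw [Finsupp.support_filter]
  refine Finset.sum_congr rfl fun i hi => ?_
  rw [Finsupp.filter_apply_pos]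
  exact (Finset.mem_filter.mp hi).2

lemma sum_l1_tsProj_le {d : ℕ} {E : Fin d → Finset ℕ+}
    (hord : ∀ i j : Fin d, i < j → ∀ a ∈ E i, ∀ b ∈ E j, a < b) (x : ℕ+ →₀ ℝ) :
    ∑ i, l1 (tsProj (E i) x) ≤ l1 x := by
  have hdisj : (↑(Finset.univ : Finset (Fin d)) : Set (Fin d)).PairwiseDisjoint
      (fun i => x.support.filter (fun k => k ∈ E i)) := by
    intro i _ i' _ hne
    simp only [Function.onFun]
    rw [Finset.disjoint_left]
    intro k hki hki'
    have h1 := (Finset.mem_filter.mp hki).2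
    have h2 := (Finset.mem_filter.mp hki').2
    rcases lt_or_gt_of_ne hne with h | h
    · exact lt_irrefl k (hord i i' h k h1 k h2)
    · exact lt_irrefl k (hord i' i h k h2 k h1)
  calc ∑ i, l1 (tsProj (E i) x)
      = ∑ i, ∑ k ∈ x.support.filter (fun k => k ∈ E i), |x k| := by
        simp only [l1_tsProj]
    _ = ∑ k ∈ Finset.univ.biUnion (fun i => x.support.filter (fun k => k ∈ E i)), |x k| :=
        (Finset.sum_biUnion hdisj).symm
    _ ≤ l1 x := by
        refine Finset.sum_le_sum_of_subset_of_nonneg ?_ (fun _ _ _ => abs_nonneg _)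
        intro k hk
        rcases Finset.mem_biUnion.mp hk with ⟨i, _, hki⟩
        exact (Finset.mem_filter.mp hki).1

variable {θ : ℝ} {S : Set (Finset ℕ+)}

lemma tnormAux_le_l1 (hθ0 : 0 < θ) (hθ1 : θ ≤ 1) :
    ∀ (m : ℕ) (x : ℕ+ →₀ ℝ), tnormAux θ S m x ≤ l1 x
  | 0, x => Real.iSup_le (fun i => abs_le_l1 x i) (l1_nonneg x)
  | m + 1, x => by
    refine max_le (tnormAux_le_l1 hθ0 hθ1 m x) ?_
    refine Real.sSup_le ?_ (l1_nonneg x)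
    rintro r ⟨d, E, hE, rfl⟩
    calc θ * ∑ i, tnormAux θ S m (tsProj (E i) x)
        ≤ θ * ∑ i, l1 (tsProj (E i) x) := by
          refine mul_le_mul_of_nonneg_left ?_ hθ0.le
          exact Finset.sum_le_sum fun i _ => tnormAux_le_l1 hθ0 hθ1 m _
      _ ≤ θ * l1 x := mul_le_mul_of_nonneg_left (sum_l1_tsProj_le hE.2.1 x) hθ0.le
      _ ≤ l1 x := by nlinarith [l1_nonneg x]

lemma tnormAux_nonneg (θ : ℝ) (S : Set (Finset ℕ+)) :
    ∀ (m : ℕ) (x : ℕ+ →₀ ℝ), 0 ≤ tnormAux θ S m x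
  | 0, x => Real.iSup_nonneg fun i => abs_nonneg _
  | m + 1, x => le_trans (tnormAux_nonneg θ S m x) (le_max_left _ _)

lemma tnormAux_le_tnorm (hθ0 : 0 < θ) (hθ1 : θ ≤ 1) (m : ℕ) (x : ℕ+ →₀ ℝ) :
    tnormAux θ S m x ≤ tnorm θ S x :=
  le_ciSup (f := fun m => tnormAux θ S m x) ⟨l1 x, by rintro r ⟨m, rfl⟩; exact tnormAux_le_l1 hθ0 hθ1 m x⟩ m

lemma abs_le_tnormAux_zero (x : ℕ+ →₀ ℝ) (i : ℕ+) : |x i| ≤ tnormAux θ S 0 x :=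
  le_ciSup (f := fun i => |x i|) ⟨l1 x, by rintro r ⟨i, rfl⟩; exact abs_le_l1 x i⟩ i

lemma aux_le_succ (hθ0 : 0 < θ) (hθ1 : θ ≤ 1) {m : ℕ} {x : ℕ+ →₀ ℝ} {d : ℕ}
    {E : Fin d → Finset ℕ+} (hE : TsAdmissible S E) :
    θ * ∑ i, tnormAux θ S m (tsProj (E i) x) ≤ tnormAux θ S (m + 1) x := by
  have hbdd : BddAbove {r : ℝ | ∃ (d : ℕ) (E : Fin d → Finset ℕ+), TsAdmissible S E ∧
      r = θ * ∑ i, tnormAux θ S m (tsProj (E i) x)} := by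
    refine ⟨l1 x, ?_⟩
    rintro r ⟨d', E', hE', rfl⟩
    calc θ * ∑ i, tnormAux θ S m (tsProj (E' i) x)
        ≤ θ * ∑ i, l1 (tsProj (E' i) x) := by
          refine mul_le_mul_of_nonneg_left ?_ hθ0.le
          exact Finset.sum_le_sum fun i _ => tnormAux_le_l1 hθ0 hθ1 m _
      _ ≤ θ * l1 x := mul_le_mul_of_nonneg_left (sum_l1_tsProj_le hE'.2.1 x) hθ0.le
      _ ≤ l1 x := by nlinarith [l1_nonneg x]
  exact le_trans (le_csSup hbdd ⟨d, E, hE, rfl⟩) (le_max_right _ _)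

lemma tnormAux_zero_vec (θ : ℝ) (S : Set (Finset ℕ+)) (hθ0 : 0 < θ) (hθ1 : θ ≤ 1) (m : ℕ) :
    tnormAux θ S m (0 : ℕ+ →₀ ℝ) = 0 :=
  le_antisymm ((tnormAux_le_l1 hθ0 hθ1 m 0).trans_eq l1_zero) (tnormAux_nonneg θ S m 0)

lemma tnormAux_add_le (hθ0 : 0 < θ) (hθ1 : θ ≤ 1) :
    ∀ (m : ℕ) (x y : ℕ+ →₀ ℝ), tnormAux θ S m (x + y) ≤ tnormAux θ S m x + tnormAux θ S m y
  | 0, x, y => by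
    refine Real.iSup_le (fun i => ?_)
      (add_nonneg (tnormAux_nonneg θ S 0 x) (tnormAux_nonneg θ S 0 y))
    rw [Finsupp.add_apply]
    exact (abs_add_le _ _).trans (add_le_add (abs_le_tnormAux_zero x i) (abs_le_tnormAux_zero y i))
  | m + 1, x, y => by
    refine max_le ((tnormAux_add_le hθ0 hθ1 m x y).trans
      (add_le_add (le_max_left _ _) (le_max_left _ _))) ?_
    refine Real.sSup_le ?_ (add_nonneg (tnormAux_nonneg θ S (m+1) x) (tnormAux_nonneg θ S (m+1) y))
    rintro r ⟨d, E, hE, rfl⟩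
    calc θ * ∑ i, tnormAux θ S m (tsProj (E i) (x + y))
        ≤ θ * ∑ i, (tnormAux θ S m (tsProj (E i) x) + tnormAux θ S m (tsProj (E i) y)) := by
          refine mul_le_mul_of_nonneg_left (Finset.sum_le_sum fun i _ => ?_) hθ0.le
          rw [tsProj_add]
          exact tnormAux_add_le hθ0 hθ1 m _ _
      _ = θ * ∑ i, tnormAux θ S m (tsProj (E i) x) + θ * ∑ i, tnormAux θ S m (tsProj (E i) y) := by
          rw [Finset.sum_add_distrib, mul_add]
      _ ≤ tnormAux θ S (m+1) x + tnormAux θ S (m+1) y :=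
          add_le_add (aux_le_succ hθ0 hθ1 hE) (aux_le_succ hθ0 hθ1 hE)

lemma tnormAux_smul_le (hθ0 : 0 < θ) (hθ1 : θ ≤ 1) {c : ℝ} (hc : 0 ≤ c) :
    ∀ (m : ℕ) (x : ℕ+ →₀ ℝ), tnormAux θ S m (c • x) ≤ c * tnormAux θ S m x
  | 0, x => by
    refine Real.iSup_le (fun i => ?_) (mul_nonneg hc (tnormAux_nonneg θ S 0 x))
    rw [Finsupp.smul_apply, smul_eq_mul, abs_mul, abs_of_nonneg hc]
    exact mul_le_mul_of_nonneg_left (abs_le_tnormAux_zero x i) hc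
  | m + 1, x => by
    refine max_le ((tnormAux_smul_le hθ0 hθ1 hc m x).trans
      (mul_le_mul_of_nonneg_left (le_max_left _ _) hc)) ?_
    refine Real.sSup_le ?_ (mul_nonneg hc (tnormAux_nonneg θ S (m+1) x))
    rintro r ⟨d, E, hE, rfl⟩
    calc θ * ∑ i, tnormAux θ S m (tsProj (E i) (c • x))
        ≤ θ * ∑ i, c * tnormAux θ S m (tsProj (E i) x) := by
          refine mul_le_mul_of_nonneg_left (Finset.sum_le_sum fun i _ => ?_) hθ0.le
          rw [tsProj_smul]
          exact tnormAux_smul_le hθ0 hθ1 hc m _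
      _ = c * (θ * ∑ i, tnormAux θ S m (tsProj (E i) x)) := by
          rw [← Finset.mul_sum]; ring
      _ ≤ c * tnormAux θ S (m+1) x :=
          mul_le_mul_of_nonneg_left (aux_le_succ hθ0 hθ1 hE) hc

lemma tnormAux_single_le (hθ0 : 0 < θ) (hθ1 : θ ≤ 1) (m : ℕ) (j : ℕ+) (c : ℝ) :
    tnormAux θ S m (Finsupp.single j c) ≤ |c| :=
  (tnormAux_le_l1 hθ0 hθ1 m _).trans (l1_single_le j c)

/-- The key combinatorial estimate. -/
lemma keyM (hθ0 : 0 < θ) (hθ1 : θ ≤ 1) (a : ℕ+ →₀ ℝ) (j : ℕ+) (c A : ℝ)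
    (hA : 1 ≤ A) (ha : ∀ m, tnormAux θ S m a ≤ A) (hc : |c| ≤ θ * |a j| + 1) :
    ∀ m, tnormAux θ S m ((1 - θ) • a + Finsupp.single j c) ≤ A + |a j| := by
  have habs : (0:ℝ) ≤ A + |a j| := by
    have := abs_nonneg (a j); linarith
  intro m
  induction m with
  | zero =>
    refine Real.iSup_le (fun i => ?_) habs
    rw [Finsupp.add_apply, Finsupp.smul_apply, smul_eq_mul]
    by_cases hij : i = j
    · subst hij
      rw [Finsupp.single_eq_same]
      have h1 : |(1 - θ) * a i + c| ≤ |(1 - θ) * a i| + |c| := abs_add_le _ _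
      rw [abs_mul, abs_of_nonneg (by linarith : (0:ℝ) ≤ 1 - θ)] at h1
      have h2 : |a i| ≥ 0 := abs_nonneg _
      nlinarith
    · rw [Finsupp.single_eq_of_ne' (Ne.symm hij), add_zero, abs_mul,
        abs_of_nonneg (by linarith : (0:ℝ) ≤ 1 - θ)]
      have h1 : |a i| ≤ A := (abs_le_tnormAux_zero a i).trans (ha 0)
      nlinarith [abs_nonneg (a i), abs_nonneg (a j)]
  | succ m ih =>
    refine max_le ih ?_
    refine Real.sSup_le ?_ habs
    rintro r ⟨d, E, hE, rfl⟩
    have hterm : ∀ i : Fin d, tnormAux θ S m (tsProj (E i) ((1 - θ) • a + Finsupp.single j c)) ≤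
        (1 - θ) * tnormAux θ S m (tsProj (E i) a) + (if j ∈ E i then |c| else 0) := by
      intro i
      rw [tsProj_add, tsProj_smul]
      refine (tnormAux_add_le hθ0 hθ1 m _ _).trans
        (add_le_add (tnormAux_smul_le hθ0 hθ1 (by linarith) m _) ?_)
      by_cases hj : j ∈ E i
      · rw [if_pos hj, tsProj_single_of_mem hj]
        exact tnormAux_single_le hθ0 hθ1 m j c
      · rw [if_neg hj, tsProj_single_of_not_mem hj]
        exact le_of_eq (tnormAux_zero_vec θ S hθ0 hθ1 m)
    have hcard : (Finset.univ.filter (fun i : Fin d => j ∈ E i)).card ≤ 1 := by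
      rw [Finset.card_le_one]
      intro i hi i' hi'
      have h1 := (Finset.mem_filter.mp hi).2
      have h2 := (Finset.mem_filter.mp hi').2
      by_contra hne
      rcases lt_or_gt_of_ne hne with h | h
      · exact lt_irrefl j (hE.2.1 i i' h j h1 j h2)
      · exact lt_irrefl j (hE.2.1 i' i h j h2 j h1)
    have hsum2 : ∑ i : Fin d, (if j ∈ E i then |c| else 0) ≤ |c| := by
      rw [← Finset.sum_filter, Finset.sum_const, nsmul_eq_mul]
      calc ((Finset.univ.filter (fun i : Fin d => j ∈ E i)).card : ℝ) * |c|
          ≤ 1 * |c| := by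
            refine mul_le_mul_of_nonneg_right ?_ (abs_nonneg c)
            exact_mod_cast hcard
        _ = |c| := one_mul _
    calc θ * ∑ i, tnormAux θ S m (tsProj (E i) ((1 - θ) • a + Finsupp.single j c))
        ≤ θ * ∑ i, ((1 - θ) * tnormAux θ S m (tsProj (E i) a) + (if j ∈ E i then |c| else 0)) :=
          mul_le_mul_of_nonneg_left (Finset.sum_le_sum fun i _ => hterm i) hθ0.le
      _ = (1 - θ) * (θ * ∑ i, tnormAux θ S m (tsProj (E i) a))
            + θ * ∑ i, (if j ∈ E i then |c| else 0) := by
          rw [Finset.sum_add_distrib, ← Finset.mul_sum, mul_add]; ring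
      _ ≤ (1 - θ) * A + θ * |c| :=
          add_le_add
            (mul_le_mul_of_nonneg_left ((aux_le_succ hθ0 hθ1 hE).trans (ha (m+1)))
              (by linarith))
            (mul_le_mul_of_nonneg_left hsum2 hθ0.le)
      _ ≤ A + |a j| := by
          have h1 : θ * |c| ≤ θ * (θ * |a j| + 1) := mul_le_mul_of_nonneg_left hc hθ0.le
          have hθθ : θ * θ ≤ 1 := by nlinarith
          have h2 : θ * θ * |a j| ≤ 1 * |a j| :=
            mul_le_mul_of_nonneg_right hθθ (abs_nonneg (a j))
          nlinarith

section Emb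

variable {X : Type*} [NormedAddCommGroup X] [NormedSpace ℝ X] (e : ℕ+ → X)

def emb (x : ℕ+ →₀ ℝ) : X := x.sum fun i c => c • e i

lemma emb_add (x y : ℕ+ →₀ ℝ) : emb e (x + y) = emb e x + emb e y :=
  Finsupp.sum_add_index' (fun i => zero_smul ℝ (e i)) (fun i b c => add_smul b c (e i))

lemma emb_smul (c : ℝ) (x : ℕ+ →₀ ℝ) : emb e (c • x) = c • emb e x := by
  unfold emb
  rw [Finsupp.sum_smul_index' (fun i => zero_smul ℝ (e i)), Finsupp.smul_sum]
  exact Finsupp.sum_congr fun i _ => by rw [smul_eq_mul, mul_smul]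

lemma emb_single (j : ℕ+) (c : ℝ) : emb e (Finsupp.single j c) = c • e j :=
  Finsupp.sum_single_index (zero_smul ℝ (e j))

lemma hasSum_emb (x : ℕ+ →₀ ℝ) : HasSum (fun i => x i • e i) (emb e x) := by
  have h : emb e x = ∑ i ∈ x.support, x i • e i := rfl
  rw [h]
  exact hasSum_sum_of_ne_finset_zero fun i hi => by
    rw [Finsupp.notMem_support_iff.mp hi, zero_smul]

end Emb

end TsAux

lemma abs_coord_le_norm {θ : ℝ} {n : ℕ} {X : Type*} [NormedAddCommGroup X] [NormedSpace ℝ X]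
    {e : ℕ+ → X} (hX : IsTsirelsonSpace θ n X e) (hθ0 : 0 < θ) (hθ1 : θ ≤ 1)
    (a : ℕ+ → ℝ) (x : X) (hx : HasSum (fun i => a i • e i) x) (j : ℕ+) :
    |a j| ≤ ‖x‖ := by
  have h1 : Filter.Tendsto (fun F : Finset ℕ+ => ∑ i ∈ F, a i • e i)
      Filter.atTop (nhds x) := hx
  refine ge_of_tendsto h1.norm ?_
  filter_upwards [Filter.eventually_ge_atTop ({j} : Finset ℕ+)] with F hF
  have hjF : j ∈ F := hF (Finset.mem_singleton_self j)
  set aF : ℕ+ →₀ ℝ := Finsupp.indicator F (fun i _ => a i) with haF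
  have hsupp : aF.support ⊆ F :=
    Finset.coe_subset.mp (Finsupp.support_indicator_subset F _)
  have hsum_eq : ∑ i ∈ F, a i • e i = aF.sum fun i c => c • e i := by
    rw [Finsupp.sum_of_support_subset aF hsupp _ (fun i _ => zero_smul ℝ (e i))]
    exact Finset.sum_congr rfl fun i hi => by rw [Finsupp.indicator_of_mem hi]
  rw [hsum_eq, hX.norm_embed aF]
  have h2 : |a j| = |aF j| := by rw [Finsupp.indicator_of_mem hjF]
  rw [h2]
  exact (TsAux.abs_le_tnormAux_zero aF j).trans (TsAux.tnormAux_le_tnorm hθ0 hθ1 0 aF)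

/-- If `y = ∑ᵢ bᵢ eᵢ` lies in the unit sphere of `T[θ, S_n]` and `j` is
a coordinate, then the vector `z = ∑_{i ≠ j} (1 − θ) bᵢ eᵢ + (b_j + sgn(b_j)) e_j`
has norm `1 + |b_j|` (where `sgn t = 1` if `t ≥ 0` and `sgn t = −1` if `t < 0`). -/
theorem tsirelson_perturbation_norm
    (θ : ℝ) (hθ0 : 0 < θ) (hθ : θ ≤ 1 / 2) (n : ℕ) (hn : 1 ≤ n)
    (X : Type*) [NormedAddCommGroup X] [NormedSpace ℝ X] (e : ℕ+ → X)
    (hX : IsTsirelsonSpace θ n X e)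
    (y : X) (hy : ‖y‖ = 1) (b : ℕ+ → ℝ) (hb : HasSum (fun i => b i • e i) y)
    (j : ℕ+) :
    ∃ z : X,
      HasSum
        (fun i => (if i = j then b j + (if 0 ≤ b j then (1 : ℝ) else -1)
          else (1 - θ) * b i) • e i) z ∧
      ‖z‖ = 1 + |b j| := by
  have hθ1 : θ ≤ 1 := by linarith
  set s : ℝ := if 0 ≤ b j then (1:ℝ) else -1 with hs
  have hs1 : |s| = 1 := by rw [hs]; split_ifs <;> norm_num
  set c : ℝ := θ * b j + s with hcdef
  set z : X := (1 - θ) • y + c • e j with hzdef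
  have habs : |b j + s| = 1 + |b j| := by
    rw [hs]; split_ifs with h
    · rw [abs_of_nonneg (by linarith), abs_of_nonneg h]; ring
    · push_neg at h
      rw [abs_of_nonpos (by linarith), abs_of_neg h]; ring
  have h1 : HasSum (fun i => (1 - θ) • (b i • e i)) ((1 - θ) • y) := hb.const_smul (1 - θ)
  have h2 : HasSum (fun i : ℕ+ => if i = j then c • e j else 0) (c • e j) := hasSum_ite_eq j _
  have h3 := h1.add h2
  have hfun : (fun i : ℕ+ => (1 - θ) • (b i • e i) + (if i = j then c • e j else 0))
      = fun i => (if i = j then b j + s else (1 - θ) * b i) • e i := by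
    funext i
    by_cases hij : i = j
    · subst hij
      rw [if_pos rfl, if_pos rfl, smul_smul, ← add_smul]
      congr 1
      rw [hcdef]; ring
    · rw [if_neg hij, if_neg hij, add_zero, smul_smul]
  rw [hfun, ← hzdef] at h3
  have hlow : 1 + |b j| ≤ ‖z‖ := by
    have hk := abs_coord_le_norm hX hθ0 hθ1
      (fun i => if i = j then b j + s else (1 - θ) * b i) z h3 j
    rw [if_pos rfl] at hk
    rwa [habs] at hk
  have hup : ‖z‖ ≤ 1 + |b j| := by
    refine le_of_forall_pos_le_add fun ε hε => ?_
    have hδ : 0 < ε / 5 := by linarith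
    obtain ⟨a₀, ha₀⟩ := hX.dense_embed.exists_dist_lt y hδ
    have hd0 : ‖TsAux.emb e a₀ - y‖ < ε / 5 := by
      rw [← dist_eq_norm, dist_comm]
      exact ha₀
    have hsum0 : HasSum (fun i => (a₀ i - b i) • e i) (TsAux.emb e a₀ - y) := by
      have h := (TsAux.hasSum_emb e a₀).sub hb
      have heq : (fun i : ℕ+ => a₀ i • e i - b i • e i) = fun i => (a₀ i - b i) • e i := by
        funext i; rw [sub_smul]
      rwa [heq] at h
    have hc0 : |a₀ j - b j| ≤ ‖TsAux.emb e a₀ - y‖ :=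
      abs_coord_le_norm hX hθ0 hθ1 _ _ hsum0 j
    set a : ℕ+ →₀ ℝ := a₀ + Finsupp.single j (b j - a₀ j) with hadef
    have haj : a j = b j := by
      rw [hadef, Finsupp.add_apply, Finsupp.single_eq_same]; ring
    have hee : ‖e j‖ ≤ 1 := by
      have he1 : e j = TsAux.emb e (Finsupp.single j (1:ℝ)) := by
        rw [TsAux.emb_single, one_smul]
      rw [he1, show ‖TsAux.emb e (Finsupp.single j (1:ℝ))‖
          = tnorm θ (Schreier n) (Finsupp.single j 1) from hX.norm_embed _]
      refine Real.iSup_le (fun m => ?_) (by norm_num)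
      exact (TsAux.tnormAux_single_le hθ0 hθ1 m j 1).trans (by norm_num)
    have hEa : ‖TsAux.emb e a - y‖ ≤ 2 * (ε / 5) := by
      have he1 : TsAux.emb e a = TsAux.emb e a₀ + (b j - a₀ j) • e j := by
        rw [hadef, TsAux.emb_add, TsAux.emb_single]
      rw [he1]
      have he2 : TsAux.emb e a₀ + (b j - a₀ j) • e j - y
          = (TsAux.emb e a₀ - y) + (b j - a₀ j) • e j := by abel
      rw [he2]
      have he3 : ‖(b j - a₀ j) • e j‖ ≤ ε / 5 := by
        rw [norm_smul, Real.norm_eq_abs, abs_sub_comm]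
        calc |a₀ j - b j| * ‖e j‖ ≤ (ε/5) * 1 :=
              mul_le_mul (hc0.trans hd0.le) hee (norm_nonneg _) hδ.le
          _ = ε/5 := mul_one _
      calc ‖(TsAux.emb e a₀ - y) + (b j - a₀ j) • e j‖
          ≤ ‖TsAux.emb e a₀ - y‖ + ‖(b j - a₀ j) • e j‖ := norm_add_le _ _
        _ ≤ ε/5 + ε/5 := add_le_add hd0.le he3
        _ = 2 * (ε/5) := by ring
    have hA : tnorm θ (Schreier n) a ≤ 1 + 2 * (ε/5) := by
      have h4 : ‖TsAux.emb e a‖ - ‖y‖ ≤ ‖TsAux.emb e a - y‖ := norm_sub_norm_le _ _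
      have h5 : ‖TsAux.emb e a‖ ≤ 1 + 2*(ε/5) := by
        rw [hy] at h4; linarith
      rw [← hX.norm_embed a]
      exact h5
    have ham : ∀ m, tnormAux θ (Schreier n) m a ≤ 1 + 2*(ε/5) :=
      fun m => (TsAux.tnormAux_le_tnorm hθ0 hθ1 m a).trans hA
    have hcabs : |c| ≤ θ * |a j| + 1 := by
      rw [haj, hcdef]
      calc |θ * b j + s| ≤ |θ * b j| + |s| := abs_add_le _ _
        _ = θ * |b j| + 1 := by rw [abs_mul, abs_of_pos hθ0, hs1]
    have hw := TsAux.keyM hθ0 hθ1 a j c (1 + 2*(ε/5)) (by linarith) ham hcabs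
    have hwt : tnorm θ (Schreier n) ((1-θ) • a + Finsupp.single j c) ≤ 1 + 2*(ε/5) + |b j| := by
      refine Real.iSup_le (fun m => ?_) (by linarith [abs_nonneg (b j)])
      have hm := hw m
      rw [haj] at hm
      linarith
    have hembw : TsAux.emb e ((1-θ) • a + Finsupp.single j c)
        = (1-θ) • TsAux.emb e a + c • e j := by
      rw [TsAux.emb_add, TsAux.emb_smul, TsAux.emb_single]
    have hzd : z - TsAux.emb e ((1-θ) • a + Finsupp.single j c)
        = (1-θ) • (y - TsAux.emb e a) := by
      rw [hembw, hzdef, smul_sub]; abel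
    have hnw : ‖TsAux.emb e ((1-θ) • a + Finsupp.single j c)‖ ≤ 1 + 2*(ε/5) + |b j| := by
      rw [show ‖TsAux.emb e ((1-θ) • a + Finsupp.single j c)‖
          = tnorm θ (Schreier n) ((1-θ) • a + Finsupp.single j c) from hX.norm_embed _]
      exact hwt
    have hnd : ‖z - TsAux.emb e ((1-θ) • a + Finsupp.single j c)‖ ≤ 2*(ε/5) := by
      rw [hzd, norm_smul, Real.norm_eq_abs, abs_of_nonneg (by linarith : (0:ℝ) ≤ 1-θ)]
      have hrev : ‖y - TsAux.emb e a‖ = ‖TsAux.emb e a - y‖ := norm_sub_rev _ _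
      rw [hrev]
      nlinarith [norm_nonneg (TsAux.emb e a - y), hEa]
    calc ‖z‖ = ‖TsAux.emb e ((1-θ) • a + Finsupp.single j c)
          + (z - TsAux.emb e ((1-θ) • a + Finsupp.single j c))‖ := by
          rw [show TsAux.emb e ((1-θ) • a + Finsupp.single j c)
            + (z - TsAux.emb e ((1-θ) • a + Finsupp.single j c)) = z from by abel]
      _ ≤ ‖TsAux.emb e ((1-θ) • a + Finsupp.single j c)‖
          + ‖z - TsAux.emb e ((1-θ) • a + Finsupp.single j c)‖ := norm_add_le _ _
      _ ≤ (1 + 2*(ε/5) + |b j|) + 2*(ε/5) := add_le_add hnw hnd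
      _ ≤ 1 + |b j| + ε := by linarith
  exact ⟨z, h3, le_antisymm hup hlow⟩
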